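/- Let g₁,…,gₙ : ℝ → ℝ be continuous, β₀ ∈ ℝ, f(x) = step(β₀ + Σᵢ gᵢ(xᵢ)) with f(x) = 1, and Δᵢ = gᵢ(xᵢ) − min_{|t−xᵢ|≤ε} gᵢ(t). Assume the features are reindexed so that Δ₁ ≥ Δ₂ ≥ ⋯ ≥ Δₙ. If the prefix set S = {1,…,k} is not a sufficient explanation for ⟨f, x, ε⟩, then no subset S' ⊆ [n] of cardinality k is a sufficient explanation. -/

import Mathlib

/-- The vector equal to `x` on coordinates in `S` and equal to `x̃` on the complement. -/
def patch {n : ℕ} (S : Finset (Fin n)) (x xt : Fin n → ℝ) : Fin n → ℝ :=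
  fun i => if i ∈ S then x i else xt i

/-- `S` is a sufficient explanation for `⟨f, x, ε⟩` w.r.t. the ℓ∞ ball of radius ε. -/
def Sufficient {n : ℕ} (f : (Fin n → ℝ) → Fin 2) (x : Fin n → ℝ) (ε : ℝ)
    (S : Finset (Fin n)) : Prop :=
  ∀ xt : Fin n → ℝ, (∀ i, |x i - xt i| ≤ ε) → f (patch S x xt) = f x

/-- The prefix set `{1,…,k}` of the features (0-indexed: indices `< k`). -/
def prefixSet (n k : ℕ) : Finset (Fin n) :=
  Finset.univ.filter (fun i : Fin n => (i : ℕ) < k)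

lemma strictMono_nat_le {k : ℕ} (ψ : Fin k → ℕ) (h : StrictMono ψ) :
    ∀ v (hv : v < k), v ≤ ψ ⟨v, hv⟩ := by
  intro v
  induction v with
  | zero => intro hv; exact Nat.zero_le _
  | succ v ih =>
    intro hv
    have hv' : v < k := Nat.lt_of_succ_lt hv
    have h1 : ψ ⟨v, hv'⟩ < ψ ⟨v + 1, hv⟩ := h (by simp [Fin.lt_def])
    have := ih hv'
    omega

/-- Rearrangement: with antitone weights, the prefix maximizes the sum among sets of card k. -/
lemma sum_le_prefix {n k : ℕ} (hk : k ≤ n) (Δ : Fin n → ℝ)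
    (hanti : ∀ i j : Fin n, i ≤ j → Δ j ≤ Δ i) (S : Finset (Fin n)) (hS : S.card = k) :
    ∑ i ∈ S, Δ i ≤ ∑ i ∈ prefixSet n k, Δ i := by
  set e := S.orderIsoOfFin hS with he
  have hpref : ∑ i ∈ prefixSet n k, Δ i = ∑ j : Fin k, Δ (Fin.castLE hk j) := by
    rw [show prefixSet n k = Finset.map (Fin.castLEEmb hk) Finset.univ by
      ext i
      simp only [prefixSet, Finset.mem_filter, Finset.mem_univ, true_and, Finset.mem_map,
        Fin.castLEEmb_apply]
      constructor
      · intro h; exact ⟨⟨i, h⟩, rfl⟩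
      · rintro ⟨j, rfl⟩; exact j.isLt]
    rw [Finset.sum_map]
    rfl
  have hSsum : ∑ i ∈ S, Δ i = ∑ j : Fin k, Δ (e j : Fin n) := by
    rw [← Finset.sum_attach S (fun i => Δ i)]
    exact Fintype.sum_equiv e.toEquiv.symm _ _ (fun i => by simp)
  rw [hpref, hSsum]
  apply Finset.sum_le_sum
  intro j _
  apply hanti
  have hsm : StrictMono (fun j : Fin k => ((e j : Fin n) : ℕ)) := by
    intro a b hab
    have := e.strictMono hab
    exact Fin.lt_def.mp (Subtype.coe_lt_coe.mpr this)
  have := strictMono_nat_le _ hsm j j.isLt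
  simpa [Fin.le_def] using this

/-- With features sorted by descending importance `Δᵢ = gᵢ(xᵢ) − min_{|t−xᵢ|≤ε} gᵢ(t)`,
if the top-`k` prefix is not sufficient then no subset of cardinality `k` is sufficient. -/
theorem stmt4 {n : ℕ} (g : Fin n → ℝ → ℝ) (β₀ : ℝ) (x : Fin n → ℝ) (ε : ℝ) (hε : 0 < ε)
    (hg : ∀ i, Continuous (g i)) (m : Fin n → ℝ)
    (hm : ∀ i, IsLeast (g i '' Set.Icc (x i - ε) (x i + ε)) (m i))
    (f : (Fin n → ℝ) → Fin 2)
    (hf : ∀ y, f y = if 0 ≤ β₀ + ∑ i, g i (y i) then 1 else 0)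
    (hfx : f x = 1)
    (hsorted : ∀ i j : Fin n, i ≤ j → g j (x j) - m j ≤ g i (x i) - m i)
    (k : ℕ) (hk : k ≤ n)
    (hpref : ¬ Sufficient f x ε (prefixSet n k)) :
    ∀ S' : Finset (Fin n), S'.card = k → ¬ Sufficient f x ε S' := by
  intro S' hcard hsuff
  -- minimizer points
  have ht : ∀ i, ∃ t, t ∈ Set.Icc (x i - ε) (x i + ε) ∧ g i t = m i := by
    intro i
    obtain ⟨t, htmem, hgt⟩ := (hm i).1
    exact ⟨t, htmem, hgt⟩
  choose t htmem htval using ht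
  have htabs : ∀ i, |x i - t i| ≤ ε := by
    intro i
    obtain ⟨h1, h2⟩ := htmem i
    rw [abs_le]; constructor <;> linarith
  have hmle : ∀ i (y : ℝ), |x i - y| ≤ ε → m i ≤ g i y := by
    intro i y h
    rw [abs_le] at h
    exact (hm i).2 ⟨y, ⟨by linarith [h.1], by linarith [h.2]⟩, rfl⟩
  -- sum over a patch
  have hpatchsum : ∀ (S : Finset (Fin n)) (xt : Fin n → ℝ),
      ∑ i, g i (patch S x xt i) = ∑ i ∈ S, g i (x i) + ∑ i ∈ Sᶜ, g i (xt i) := by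
    intro S xt
    rw [← Finset.sum_add_sum_compl S (fun i => g i (patch S x xt i))]
    congr 1
    · exact Finset.sum_congr rfl (fun i hi => by simp [patch, hi])
    · exact Finset.sum_congr rfl (fun i hi => by
        simp only [Finset.mem_compl] at hi; simp [patch, hi])
  -- value of a set
  have hval : ∀ S : Finset (Fin n),
      ∑ i ∈ S, g i (x i) + ∑ i ∈ Sᶜ, m i
        = (∑ i ∈ S, (g i (x i) - m i)) + ∑ i, m i := by
    intro S
    have h1 := Finset.sum_add_sum_compl S m
    have h2 : ∑ i ∈ S, (g i (x i) - m i) = ∑ i ∈ S, g i (x i) - ∑ i ∈ S, m i :=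
      Finset.sum_sub_distrib _ _
    linarith
  -- from sufficiency of S', get 0 ≤ val S'
  have hS'val : 0 ≤ β₀ + (∑ i ∈ S', g i (x i) + ∑ i ∈ S'ᶜ, m i) := by
    have h := hsuff t htabs
    rw [hfx, hf] at h
    by_contra hneg
    push_neg at hneg
    rw [hpatchsum] at h
    have hcompl : ∑ i ∈ S'ᶜ, g i (t i) = ∑ i ∈ S'ᶜ, m i :=
      Finset.sum_congr rfl (fun i _ => htval i)
    rw [hcompl, if_neg (by linarith)] at h
    exact absurd h (by decide)
  -- rearrangement
  have hre : ∑ i ∈ S', (g i (x i) - m i) ≤ ∑ i ∈ prefixSet n k, (g i (x i) - m i) :=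
    sum_le_prefix hk _ hsorted S' hcard
  -- prefix value nonneg
  have hprefval : 0 ≤ β₀ + (∑ i ∈ prefixSet n k, g i (x i) + ∑ i ∈ (prefixSet n k)ᶜ, m i) := by
    rw [hval]
    rw [hval] at hS'val
    linarith
  -- prefix is sufficient: contradiction
  apply hpref
  intro xt hxt
  rw [hfx, hf, hpatchsum]
  have hge : ∑ i ∈ (prefixSet n k)ᶜ, m i ≤ ∑ i ∈ (prefixSet n k)ᶜ, g i (xt i) :=
    Finset.sum_le_sum (fun i _ => hmle i (xt i) (hxt i))
  rw [if_pos (by linarith)]
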